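/- arXiv:2502.08305 — 2 statements merged into one kernel-verified Lean document; each statement's English description precedes it below -/
import Mathlib

section
/- For every positive integer n and real s > 0, one has σ_s(n)/n^s = ζ(s+1)·∑_{r=1}^∞ c_r(n)/r^{s+1}, where the series on the right converges absolutely. -/
open Finset

/-- The Ramanujan sum `c_r(n)`, via its Möbius-function expression. -/
def ramanujanSum (r n : ℕ) : ℤ :=
  ∑ d ∈ (Nat.gcd n r).divisors, (ArithmeticFunction.moebius (r / d)) * d

open ArithmeticFunction
open scoped ArithmeticFunction.Moebius ArithmeticFunction.zeta
lemma zeta_mul_moebius_real (x : ℝ) (hx : 1 < x) :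
    (∑' k : ℕ, ((k : ℝ)) ^ (-x)) * (∑' m : ℕ, (μ m : ℝ) / (m : ℝ) ^ x) = 1 := by
  have h1 : _root_.LSeries (fun n => ((ζ n : ℕ) : ℂ)) x = ((∑' k : ℕ, ((k : ℝ)) ^ (-x) : ℝ) : ℂ) := by
    rw [Complex.ofReal_tsum]
    refine tsum_congr fun k => ?_
    rcases eq_or_ne k 0 with rfl | hk
    · simp [LSeries.term, Real.zero_rpow (neg_ne_zero.mpr (by linarith) : -x ≠ 0)]
    · rw [LSeries.term_of_ne_zero hk, zeta_apply_ne hk,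
        Complex.ofReal_cpow (by positivity) (-x)]
      push_cast
      rw [Complex.cpow_neg]
      simp
  have h2 : _root_.LSeries (fun n => ((μ n : ℤ) : ℂ)) x
      = ((∑' m : ℕ, (μ m : ℝ) / (m : ℝ) ^ x : ℝ) : ℂ) := by
    rw [Complex.ofReal_tsum]
    refine tsum_congr fun m => ?_
    rcases eq_or_ne m 0 with rfl | hm
    · simp [LSeries.term]
    · rw [LSeries.term_of_ne_zero hm, Complex.ofReal_div,
        Complex.ofReal_cpow (by positivity) x]
      push_cast
      ring
  have key := ArithmeticFunction.LSeries_zeta_mul_Lseries_moebius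
    (s := (x : ℂ)) (by simpa using hx)
  rw [h1, h2, ← Complex.ofReal_mul] at key
  exact_mod_cast key

theorem stmt_10 (n : ℕ) (hn : 0 < n) (s : ℝ) (hs : 0 < s) :
    Summable (fun r : ℕ => |(ramanujanSum (r + 1) n : ℝ)| / ((r : ℝ) + 1) ^ (s + 1))
    ∧ (∑ d ∈ n.divisors, (d : ℝ) ^ s) / (n : ℝ) ^ s
      = (∑' k : ℕ, ((k : ℝ) + 1) ^ (-(s + 1)))
        * ∑' r : ℕ, (ramanujanSum (r + 1) n : ℝ) / ((r : ℝ) + 1) ^ (s + 1) := by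
  set x : ℝ := s + 1 with hxdef
  have hx : 1 < x := by simp [hxdef]; linarith
  have hx0 : 0 < x := by linarith
  set G : ℕ → ℝ := fun r => (ramanujanSum r n : ℝ) / (r : ℝ) ^ x with hGdef
  set σn : ℝ := ∑ d ∈ n.divisors, (d : ℝ) with hσdef
  -- bound on the Ramanujan sums
  have hcb : ∀ r : ℕ, |(ramanujanSum r n : ℝ)| ≤ σn := by
    intro r
    have : ((ramanujanSum r n : ℤ) : ℝ)
        = ∑ d ∈ (Nat.gcd n r).divisors, (μ (r / d) : ℝ) * (d : ℝ) := by
      simp [ramanujanSum]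
    rw [this]
    calc |∑ d ∈ (Nat.gcd n r).divisors, (μ (r / d) : ℝ) * (d : ℝ)|
        ≤ ∑ d ∈ (Nat.gcd n r).divisors, |(μ (r / d) : ℝ) * (d : ℝ)| :=
          Finset.abs_sum_le_sum_abs _ _
      _ ≤ ∑ d ∈ (Nat.gcd n r).divisors, (d : ℝ) := by
          refine Finset.sum_le_sum fun d hd => ?_
          rw [abs_mul]
          have h1 : |(μ (r / d) : ℝ)| ≤ 1 := by
            exact_mod_cast (abs_moebius_le_one (n := r / d))
          have h2 : |(d : ℝ)| = (d : ℝ) := abs_of_nonneg (by positivity)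
          rw [h2]
          nlinarith [abs_nonneg ((d : ℝ))]
      _ ≤ σn := Finset.sum_le_sum_of_subset_of_nonneg
          (Nat.divisors_subset_of_dvd hn.ne' (Nat.gcd_dvd_left n r))
          (fun i _ _ => by positivity)
  have hrpow : Summable fun r : ℕ => (r : ℝ) ^ (-x) :=
    Real.summable_nat_rpow.mpr (by linarith)
  -- summability of |G|
  have habsG : Summable fun r : ℕ => |G r| := by
    refine Summable.of_nonneg_of_le (fun r => abs_nonneg _)
      (fun r => ?_) (hrpow.mul_left σn)
    rcases eq_or_ne r 0 with rfl | hr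
    · have hG0 : G 0 = 0 := by simp [hGdef, Real.zero_rpow hx0.ne']
      rw [hG0, abs_zero, Nat.cast_zero, Real.zero_rpow (neg_ne_zero.mpr hx0.ne'), mul_zero]
    · have hcast : (0:ℝ) < (r:ℝ) := by exact_mod_cast Nat.pos_of_ne_zero hr
      have hrp : (0:ℝ) < (r : ℝ) ^ x := Real.rpow_pos_of_pos hcast x
      rw [hGdef, abs_div, abs_of_nonneg hrp.le, Real.rpow_neg hcast.le,
        mul_comm σn _, ← div_eq_inv_mul]
      gcongr
      exact hcb r
  have hGsum : Summable G := habsG.of_abs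
  -- conjunct 1
  have hc1 : Summable (fun r : ℕ =>
      |(ramanujanSum (r + 1) n : ℝ)| / ((r : ℝ) + 1) ^ (s + 1)) := by
    have := (summable_nat_add_iff (f := fun r => |G r|) 1).mpr habsG
    refine this.congr fun r => ?_
    have hp : (0:ℝ) < ((r:ℝ) + 1) ^ x :=
      Real.rpow_pos_of_pos (by positivity) x
    rw [hGdef]
    simp only []
    rw [abs_div]
    push_cast
    rw [abs_of_nonneg hp.le]
  set H : ℕ → ℕ → ℝ := fun d r =>
    if d ∣ r then (μ (r / d) : ℝ) * (d : ℝ) / (r : ℝ) ^ x else 0 with hHdef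
  -- summability of each H d
  have hHsum : ∀ d : ℕ, Summable (H d) := by
    intro d
    have key : Summable fun r : ℕ => |H d r| := by
      refine Summable.of_nonneg_of_le (fun r => abs_nonneg _) (fun r => ?_)
        (hrpow.mul_left (d:ℝ))
      rcases eq_or_ne r 0 with rfl | hr
      · rw [Nat.cast_zero, Real.zero_rpow (neg_ne_zero.mpr hx0.ne'), mul_zero]
        simp [hHdef, Real.zero_rpow hx0.ne']
      · have hcast : (0:ℝ) < (r:ℝ) := by exact_mod_cast Nat.pos_of_ne_zero hr
        have hrp : (0:ℝ) < (r : ℝ) ^ x := Real.rpow_pos_of_pos hcast x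
        rw [Real.rpow_neg hcast.le, mul_comm ((d:ℝ)) _, ← div_eq_inv_mul]
        rw [hHdef]
        simp only []
        split_ifs with hdvd
        · rw [abs_div, abs_of_nonneg hrp.le]
          gcongr
          rw [abs_mul, abs_of_nonneg (by positivity : (0:ℝ) ≤ (d:ℝ))]
          have h1 : |(μ (r / d) : ℝ)| ≤ 1 := by
            exact_mod_cast (abs_moebius_le_one (n := r / d))
          nlinarith [abs_nonneg ((μ (r / d) : ℝ))]
        · rw [abs_zero]
          positivity
    exact key.of_abs
  -- decomposition of G
  have hGdec : ∀ r : ℕ, G r = ∑ d ∈ n.divisors, H d r := by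
    intro r
    rcases eq_or_ne r 0 with rfl | hr
    · simp [hGdef, hHdef, ramanujanSum, Real.zero_rpow hx0.ne']
    · have hfilter : (Nat.gcd n r).divisors = n.divisors.filter (· ∣ r) := by
        ext a
        simp only [Nat.mem_divisors, Finset.mem_filter]
        constructor
        · rintro ⟨ha, -⟩
          exact ⟨⟨(Nat.dvd_gcd_iff.mp ha).1, hn.ne'⟩, (Nat.dvd_gcd_iff.mp ha).2⟩
        · rintro ⟨⟨h1, -⟩, h2⟩
          exact ⟨Nat.dvd_gcd h1 h2, Nat.gcd_ne_zero_right hr⟩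
      have : ((ramanujanSum r n : ℤ) : ℝ)
          = ∑ d ∈ (Nat.gcd n r).divisors, (μ (r / d) : ℝ) * (d : ℝ) := by
        simp [ramanujanSum]
      rw [hGdef]
      simp only []
      rw [this, hfilter, Finset.sum_filter, Finset.sum_div]
      refine Finset.sum_congr rfl fun d hd => ?_
      rw [hHdef]
      simp only []
      split_ifs with hdvd
      · rfl
      · exact zero_div _
  set M : ℝ := ∑' m : ℕ, (μ m : ℝ) / (m : ℝ) ^ x with hMdef
  -- inner evaluation
  have hinner : ∀ d ∈ n.divisors, ∑' r : ℕ, H d r = (d:ℝ)^(-s) * M := by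
    intro d hd
    have hd0 : d ≠ 0 := (Nat.pos_of_mem_divisors hd).ne'
    have hdpos : (0:ℝ) < (d:ℝ) := by exact_mod_cast Nat.pos_of_ne_zero hd0
    have hinj : Function.Injective (fun m : ℕ => d * m) := fun a b h =>
      Nat.eq_of_mul_eq_mul_left (Nat.pos_of_ne_zero hd0) h
    have hsupp : Function.support (H d) ⊆ Set.range (fun m : ℕ => d * m) := by
      intro r hr
      rw [Function.mem_support, hHdef] at hr
      simp only [] at hr
      by_cases hdvd : d ∣ r
      · obtain ⟨c, rfl⟩ := hdvd; exact ⟨c, rfl⟩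
      · simp [hdvd] at hr
    rw [← Function.Injective.tsum_eq hinj hsupp]
    have hterm : ∀ m : ℕ, H d (d * m) = (d:ℝ)^(-s) * ((μ m : ℝ) / (m:ℝ)^x) := by
      intro m
      have hdvd : d ∣ d * m := dvd_mul_right d m
      have hdiv : d * m / d = m := Nat.mul_div_cancel_left m (Nat.pos_of_ne_zero hd0)
      rw [hHdef]
      simp only []
      rw [if_pos hdvd, hdiv]
      rcases eq_or_ne m 0 with rfl | hm
      · simp
      · have hmpos : (0:ℝ) < (m:ℝ) := by exact_mod_cast Nat.pos_of_ne_zero hm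
        have hcast : ((d*m : ℕ):ℝ) = (d:ℝ)*(m:ℝ) := by push_cast; ring
        rw [hcast, Real.mul_rpow hdpos.le hmpos.le]
        have hds : (d:ℝ)^(-s) = (d:ℝ) * ((d:ℝ)^x)⁻¹ := by
          have h1 : -s = 1 + -x := by rw [hxdef]; ring
          rw [h1, Real.rpow_add hdpos, Real.rpow_one, Real.rpow_neg hdpos.le]
        rw [hds]
        have hxne : ((m:ℝ))^x ≠ 0 := (Real.rpow_pos_of_pos hmpos x).ne'
        have hdne : ((d:ℝ))^x ≠ 0 := (Real.rpow_pos_of_pos hdpos x).ne'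
        field_simp
    calc (∑' m : ℕ, H d (d*m)) = ∑' m : ℕ, (d:ℝ)^(-s) * ((μ m : ℝ)/(m:ℝ)^x) :=
          tsum_congr hterm
      _ = (d:ℝ)^(-s) * M := by rw [tsum_mul_left]
  have hT : ∑' r : ℕ, G r = (∑ d ∈ n.divisors, (d:ℝ)^(-s)) * M := by
    calc ∑' r : ℕ, G r = ∑' r : ℕ, ∑ d ∈ n.divisors, H d r := tsum_congr hGdec
      _ = ∑ d ∈ n.divisors, ∑' r : ℕ, H d r := Summable.tsum_finsetSum (fun d _ => hHsum d)
      _ = ∑ d ∈ n.divisors, (d:ℝ)^(-s) * M := Finset.sum_congr rfl hinner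
      _ = (∑ d ∈ n.divisors, (d:ℝ)^(-s)) * M := by rw [Finset.sum_mul]
  have hZ : (∑' k : ℕ, ((k:ℝ)+1)^(-x)) = ∑' k : ℕ, (k:ℝ)^(-x) := by
    rw [Summable.tsum_eq_zero_add hrpow, Nat.cast_zero,
      Real.zero_rpow (neg_ne_zero.mpr hx0.ne'), zero_add]
    exact tsum_congr fun k => by push_cast; ring_nf
  have hGshift : (∑' r : ℕ, (ramanujanSum (r+1) n : ℝ) / ((r:ℝ)+1)^x)
      = ∑' r : ℕ, G r := by
    rw [Summable.tsum_eq_zero_add hGsum]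
    have hG0 : G 0 = 0 := by simp [hGdef, ramanujanSum, Real.zero_rpow hx0.ne']
    rw [hG0, zero_add]
    refine (tsum_congr fun r => ?_).symm
    rw [hGdef]
    simp only []
    push_cast
    ring_nf
  have hL : (∑ d ∈ n.divisors, (d:ℝ)^s) / (n:ℝ)^s
      = ∑ d ∈ n.divisors, (d:ℝ)^(-s) := by
    have hns : (0:ℝ) < (n:ℝ) := by exact_mod_cast hn
    rw [← Nat.sum_div_divisors n (fun d : ℕ => ((d:ℕ):ℝ)^(-s)), Finset.sum_div]
    refine (Finset.sum_congr rfl fun d hd => ?_).symm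
    have hd0 : 0 < d := Nat.pos_of_mem_divisors hd
    have hdvd : d ∣ n := (Nat.mem_divisors.mp hd).1
    have hcast : ((n/d : ℕ):ℝ) = (n:ℝ)/(d:ℝ) :=
      Nat.cast_div hdvd (by exact_mod_cast hd0.ne')
    have hkey : ((n:ℝ)/(d:ℝ))^(-s) = (d:ℝ)^s/(n:ℝ)^s := by
      rw [Real.rpow_neg (by positivity), Real.div_rpow hns.le (by positivity), inv_div]
    rw [hcast, hkey]
  have hzm : (∑' k : ℕ, ((k:ℝ))^(-x)) * M = 1 := zeta_mul_moebius_real x hx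
  refine ⟨hc1, ?_⟩
  rw [hL, hZ, hGshift, hT, mul_left_comm, hzm, mul_one]
end

section
/- There exists a constant C such that for every positive integer N, ∑_{d | N} (log d)/d ≤ C·σ_{−1}(N)·log log(N + 2). -/
open Finset ArithmeticFunction

theorem log_eq_sum (m : ℕ) (hm : m ≠ 0) :
    Real.log m = ∑ p ∈ m.primeFactors, (m.factorization p : ℝ) * Real.log p := by
  conv_lhs => rw [← Nat.factorization_prod_pow_eq_self hm]
  rw [Finsupp.prod, Nat.support_factorization]
  push_cast
  rw [Real.log_prod]
  · exact Finset.sum_congr rfl fun p hp => by rw [Real.log_pow]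
  · intro p hp
    have h2 := (Nat.prime_of_mem_primeFactors hp).pos
    have : (0:ℝ) < p := by exact_mod_cast h2
    positivity

theorem div_le_factorization_factorial {n p : ℕ} (hp : p.Prime) :
    n / p ≤ (n.factorial).factorization p := by
  rw [← Nat.Prime.pow_dvd_iff_le_factorization hp n.factorial_ne_zero]
  rw [Nat.Prime.pow_dvd_factorial_iff hp (Nat.lt_succ_self _)]
  rcases Nat.eq_zero_or_pos (n / p) with h | h
  · simp [h]
  · have h1 : 1 ∈ Finset.Ico 1 (Nat.log p n + 1) := by
      simp only [Finset.mem_Ico, le_refl, true_and]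
      have : p ≤ n := by
        by_contra hc
        push_neg at hc
        rw [Nat.div_eq_of_lt hc] at h; omega
      have := Nat.log_pos hp.one_lt this
      omega
    calc n / p = n / p ^ 1 := by rw [pow_one]
      _ ≤ _ := Finset.single_le_sum (f := fun i => n / p ^ i) (fun i _ => Nat.zero_le _) h1

theorem theta_le (n : ℕ) :
    ∑ p ∈ (range (n+1)).filter Nat.Prime, Real.log p ≤ n * Real.log 4 := by
  have hpos : 0 < primorial n := by
    rw [primorial]; exact Finset.prod_pos fun p hp => (Finset.mem_filter.1 hp).2.pos
  have h1 : Real.log (primorial n) ≤ Real.log ((4:ℕ) ^ n) :=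
    Real.log_le_log (by exact_mod_cast hpos) (by exact_mod_cast primorial_le_4_pow n)
  rw [primorial] at h1
  push_cast at h1
  rw [Real.log_pow] at h1
  calc ∑ p ∈ (range (n+1)).filter Nat.Prime, Real.log p
      = Real.log (↑(∏ p ∈ (range (n+1)).filter Nat.Prime, p)) := by
        push_cast
        rw [Real.log_prod]
        intro p hp
        have := (Finset.mem_filter.1 hp).2.pos
        exact_mod_cast this.ne'
    _ ≤ n * Real.log 4 := by
        refine le_trans ?_ h1
        push_cast
        exact le_refl _

theorem mertens (n : ℕ) (hn : 1 ≤ n) :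
    ∑ p ∈ (range (n+1)).filter Nat.Prime, Real.log p / p ≤ Real.log n + Real.log 4 := by
  have hn0 : (0:ℝ) < n := by exact_mod_cast hn
  have key : (n:ℝ) * ∑ p ∈ (range (n+1)).filter Nat.Prime, Real.log p / p
      ≤ Real.log (n.factorial) + ∑ p ∈ (range (n+1)).filter Nat.Prime, Real.log p := by
    rw [Finset.mul_sum]
    have hsub : (range (n+1)).filter Nat.Prime ⊆ (n.factorial).primeFactors := by
      intro p hp
      simp only [Finset.mem_filter, Finset.mem_range] at hp
      obtain ⟨hlt, hp⟩ := hp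
      exact Nat.mem_primeFactors.2 ⟨hp, (Nat.Prime.dvd_factorial hp).2 (by omega),
        n.factorial_ne_zero⟩
    have hlog : ∑ p ∈ (range (n+1)).filter Nat.Prime, ((n/p : ℕ) : ℝ) * Real.log p
        ≤ Real.log (n.factorial) := by
      rw [log_eq_sum n.factorial n.factorial_ne_zero]
      calc ∑ p ∈ (range (n+1)).filter Nat.Prime, ((n/p : ℕ) : ℝ) * Real.log p
          ≤ ∑ p ∈ (range (n+1)).filter Nat.Prime,
              ((n.factorial.factorization p : ℝ)) * Real.log p := by
            apply Finset.sum_le_sum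
            intro p hp
            have hpp := (Finset.mem_filter.1 hp).2
            have hlp : (0:ℝ) ≤ Real.log p :=
              Real.log_nonneg (by exact_mod_cast hpp.one_lt.le)
            have := div_le_factorization_factorial (n := n) hpp
            exact mul_le_mul_of_nonneg_right (by exact_mod_cast this) hlp
        _ ≤ _ := by
            apply Finset.sum_le_sum_of_subset_of_nonneg hsub
            intro p hp _
            have hpp := Nat.prime_of_mem_primeFactors hp
            have hlp : (0:ℝ) ≤ Real.log p :=
              Real.log_nonneg (by exact_mod_cast hpp.one_lt.le)
            positivity
    calc ∑ p ∈ (range (n+1)).filter Nat.Prime, (n:ℝ) * (Real.log p / p)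
        ≤ ∑ p ∈ (range (n+1)).filter Nat.Prime, (((n/p : ℕ) : ℝ) * Real.log p + Real.log p) := by
          apply Finset.sum_le_sum
          intro p hp
          have hpp := (Finset.mem_filter.1 hp).2
          have hp0 : (0:ℝ) < p := by exact_mod_cast hpp.pos
          have hlp : (0:ℝ) ≤ Real.log p :=
            Real.log_nonneg (by exact_mod_cast hpp.one_lt.le)
          have hfloor : (n:ℝ) / p ≤ ((n/p : ℕ) : ℝ) + 1 := by
            rw [div_le_iff₀ hp0]
            have : n < p * (n / p + 1) := Nat.lt_mul_div_succ n hpp.pos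
            have : (n:ℝ) < p * ((n/p : ℕ) + 1) := by exact_mod_cast this
            nlinarith
          calc (n:ℝ) * (Real.log p / p) = (n / p) * Real.log p := by ring
            _ ≤ (((n/p : ℕ) : ℝ) + 1) * Real.log p := mul_le_mul_of_nonneg_right hfloor hlp
            _ = ((n/p : ℕ) : ℝ) * Real.log p + Real.log p := by ring
      _ ≤ _ := by
          rw [Finset.sum_add_distrib]
          exact add_le_add_left hlog _
  have hfact : Real.log (n.factorial) ≤ n * Real.log n := by
    have h1 : (n.factorial : ℝ) ≤ (n:ℝ) ^ n := by exact_mod_cast n.factorial_le_pow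
    calc Real.log (n.factorial) ≤ Real.log ((n:ℝ)^n) :=
          Real.log_le_log (by exact_mod_cast n.factorial_pos) h1
      _ = n * Real.log n := Real.log_pow n n
  have htheta := theta_le n
  rw [← mul_le_mul_iff_right₀ hn0]
  calc (n:ℝ) * ∑ p ∈ (range (n+1)).filter Nat.Prime, Real.log p / p
      ≤ n * Real.log n + n * Real.log 4 := by linarith
    _ = n * (Real.log n + Real.log 4) := by ring

theorem primeFactors_bound (N : ℕ) (hN : 0 < N) :
    ∑ p ∈ N.primeFactors, Real.log p / p
      ≤ Real.log (Real.log (N+2) + 3) + Real.log 4 + 1 := by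
  set x : ℝ := Real.log (N+2) + 3 with hx
  have hlogN2 : (0:ℝ) ≤ Real.log (N+2) := Real.log_nonneg (by exact_mod_cast by omega)
  have hx3 : (3:ℝ) ≤ x := by simp [hx]; linarith
  have hx0 : (0:ℝ) < x := by linarith
  have he : Real.exp 1 < 3 := lt_trans Real.exp_one_lt_d9 (by norm_num)
  have hex : Real.exp 1 ≤ x := by linarith
  set n : ℕ := ⌊x⌋₊ with hn
  have hn3 : 3 ≤ n := Nat.le_floor (by exact_mod_cast hx3)
  have hnx : (n:ℝ) ≤ x := Nat.floor_le hx0.le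
  have hxn : x < n + 1 := Nat.lt_floor_add_one x
  have hnonneg : ∀ p : ℕ, p.Prime → (0:ℝ) ≤ Real.log p / p := by
    intro p hpp
    have h1 : (1:ℝ) ≤ p := by exact_mod_cast hpp.one_lt.le
    have := Real.log_nonneg h1
    positivity
  rw [← Finset.sum_filter_add_sum_filter_not N.primeFactors (· ≤ n)]
  have hsmall : ∑ p ∈ N.primeFactors.filter (· ≤ n), Real.log p / p
      ≤ Real.log x + Real.log 4 := by
    have hsub : N.primeFactors.filter (· ≤ n) ⊆ (range (n+1)).filter Nat.Prime := by
      intro p hp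
      simp only [Finset.mem_filter, Finset.mem_range] at *
      exact ⟨by omega, Nat.prime_of_mem_primeFactors hp.1⟩
    calc ∑ p ∈ N.primeFactors.filter (· ≤ n), Real.log p / p
        ≤ ∑ p ∈ (range (n+1)).filter Nat.Prime, Real.log p / p := by
          apply Finset.sum_le_sum_of_subset_of_nonneg hsub
          intro p hp _
          exact hnonneg p (Finset.mem_filter.1 hp).2
      _ ≤ Real.log n + Real.log 4 := mertens n (by omega)
      _ ≤ Real.log x + Real.log 4 := by
          have : Real.log n ≤ Real.log x :=
            Real.log_le_log (by exact_mod_cast by omega) hnx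
          linarith
  have hbig : ∑ p ∈ N.primeFactors.filter (fun p => ¬ p ≤ n), Real.log p / p ≤ 1 := by
    set P := N.primeFactors.filter (fun p => ¬ p ≤ n) with hP
    have hxp : ∀ p ∈ P, x ≤ (p:ℝ) := by
      intro p hp
      simp only [hP, Finset.mem_filter, not_le] at hp
      have : (n:ℝ) + 1 ≤ p := by exact_mod_cast hp.2
      linarith
    -- card bound
    have hprod : (∏ p ∈ P, p) ≤ N := by
      apply Nat.le_of_dvd hN
      exact dvd_trans (Finset.prod_dvd_prod_of_subset _ _ _ (Finset.filter_subset _ _))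
        (Nat.prod_primeFactors_dvd N)
    have hxk : x ^ P.card ≤ (N:ℝ) := by
      calc x ^ P.card = ∏ _p ∈ P, x := by rw [Finset.prod_const]
        _ ≤ ∏ p ∈ P, (p:ℝ) := Finset.prod_le_prod (fun _ _ => hx0.le) hxp
        _ = ((∏ p ∈ P, p : ℕ) : ℝ) := by push_cast; rfl
        _ ≤ N := by exact_mod_cast hprod
    have hcard : (P.card : ℝ) * Real.log x ≤ Real.log N := by
      calc (P.card : ℝ) * Real.log x = Real.log (x ^ P.card) := (Real.log_pow _ _).symm
        _ ≤ Real.log N := Real.log_le_log (by positivity) hxk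
    have hlogx1 : (1:ℝ) ≤ Real.log x := by
      rw [← Real.log_exp 1]
      exact Real.log_le_log (Real.exp_pos 1) hex
    have hterm : ∀ p ∈ P, Real.log p / p ≤ Real.log x / x := by
      intro p hp
      exact Real.log_div_self_antitoneOn hex (le_trans hex (hxp p hp)) (hxp p hp)
    calc ∑ p ∈ P, Real.log p / p ≤ ∑ _p ∈ P, Real.log x / x :=
          Finset.sum_le_sum hterm
      _ = P.card * (Real.log x / x) := by rw [Finset.sum_const, nsmul_eq_mul]
      _ = (P.card * Real.log x) / x := by ring
      _ ≤ Real.log N / x := by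
          gcongr
      _ ≤ 1 := by
          rw [div_le_one hx0]
          have : Real.log N ≤ Real.log (N+2) :=
            Real.log_le_log (by exact_mod_cast hN) (by linarith)
          linarith
  linarith


theorem geom_aux {x : ℝ} (h0 : 0 ≤ x) (h1 : x < 1) (v : ℕ) :
    ∑ i ∈ range v, x ^ i ≤ (1 - x)⁻¹ := by
  have hd : (0:ℝ) < 1 - x := by linarith
  rw [geom_sum_eq h1.ne]
  rw [div_le_iff_of_neg (by linarith : x - 1 < 0)]
  have hxv : (0:ℝ) ≤ x ^ v := by positivity
  have hcalc : (1 - x)⁻¹ * (x - 1) = -((1 - x)⁻¹ * (1 - x)) := by ring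
  rw [hcalc, inv_mul_cancel₀ hd.ne']
  linarith

theorem vonMangoldt_div_sum (N : ℕ) (hN : 0 < N) :
    ∑ m ∈ N.divisors, Λ m / m ≤ 2 * ∑ p ∈ N.primeFactors, Real.log p / p := by
  have h1 : ∑ m ∈ N.divisors, Λ m / m
      = ∑ m ∈ N.divisors.filter IsPrimePow, Λ m / m := by
    rw [Finset.sum_filter_of_ne]
    intro m _ hm
    have : Λ m ≠ 0 := fun h => hm (by simp [h])
    exact vonMangoldt_ne_zero_iff.1 this
  have h2 : ∑ m ∈ N.divisors.filter IsPrimePow, Λ m / m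
      = ∑ q ∈ N.primeFactors.sigma (fun p => Finset.Icc 1 (N.factorization p)),
          Real.log q.1 / (q.1 ^ q.2 : ℕ) := by
    apply Finset.sum_nbij'
      (i := fun m => (⟨m.minFac, m.factorization m.minFac⟩ : (_ : ℕ) × ℕ))
      (j := fun q => q.1 ^ q.2)
    · intro m hm
      simp only [Finset.mem_filter, Nat.mem_divisors] at hm
      obtain ⟨⟨hdvd, hN0⟩, hpp⟩ := hm
      have hm0 : m ≠ 0 := fun h => by simp [h] at hpp; exact (by simpa [h] using hpp.one_lt)
      have hpf := hpp.minFac_pow_factorization_eq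
      have hprime : m.minFac.Prime := Nat.minFac_prime hpp.one_lt.ne'
      simp only [Finset.mem_sigma, Nat.mem_primeFactors, Finset.mem_Icc]
      refine ⟨⟨hprime, dvd_trans (Nat.minFac_dvd m) hdvd, hN0⟩, ?_, ?_⟩
      · have : m.factorization m.minFac ≠ 0 := by
          intro h
          rw [h, pow_zero] at hpf
          exact hpp.one_lt.ne' hpf.symm
        omega
      · rw [← Nat.Prime.pow_dvd_iff_le_factorization hprime hN0, hpf]
        exact hdvd
    · intro q hq
      simp only [Finset.mem_sigma, Nat.mem_primeFactors, Finset.mem_Icc] at hq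
      obtain ⟨⟨hp, hpdvd, hN0⟩, ha1, hav⟩ := hq
      simp only [Finset.mem_filter, Nat.mem_divisors]
      refine ⟨⟨?_, hN0⟩, ?_⟩
      · rw [Nat.Prime.pow_dvd_iff_le_factorization hp hN0]; exact hav
      · exact ⟨q.1, q.2, hp.prime, by omega, rfl⟩
    · intro m hm
      simp only [Finset.mem_filter, Nat.mem_divisors] at hm
      exact hm.2.minFac_pow_factorization_eq
    · intro q hq
      simp only [Finset.mem_sigma, Nat.mem_primeFactors, Finset.mem_Icc] at hq
      obtain ⟨⟨hp, hpdvd, hN0⟩, ha1, hav⟩ := hq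
      have h1 : (q.1 ^ q.2).minFac = q.1 := hp.pow_minFac (by omega)
      ext
      · exact h1
      · simp only [h1, hp.factorization_pow, Finsupp.single_eq_same]
        exact HEq.rfl
    · intro m hm
      simp only [Finset.mem_filter, Nat.mem_divisors] at hm
      obtain ⟨⟨hdvd, hN0⟩, hpp⟩ := hm
      have hprime : m.minFac.Prime := Nat.minFac_prime hpp.one_lt.ne'
      have hpf := hpp.minFac_pow_factorization_eq
      have ha : m.factorization m.minFac ≠ 0 := by
        intro h
        rw [h, pow_zero] at hpf
        exact hpp.one_lt.ne' hpf.symm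
      conv_lhs => rw [← hpf]
      rw [vonMangoldt_apply_pow ha, vonMangoldt_apply_prime hprime, hpf]
  rw [h1, h2, Finset.sum_sigma, Finset.mul_sum]
  apply Finset.sum_le_sum
  intro p hp
  have hprime := Nat.prime_of_mem_primeFactors hp
  have hp2 : (2:ℝ) ≤ p := by exact_mod_cast hprime.two_le
  have hp0 : (0:ℝ) < p := by linarith
  have hlp : (0:ℝ) ≤ Real.log p := Real.log_nonneg (by linarith)
  have hinv : ∑ a ∈ Finset.Icc 1 (N.factorization p), ((p:ℝ) ^ a)⁻¹ ≤ 2 / p := by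
    have hr0 : (0:ℝ) ≤ (p:ℝ)⁻¹ := by positivity
    have hr1 : (p:ℝ)⁻¹ < 1 := by
      rw [inv_lt_one_iff₀]; right; linarith
    calc ∑ a ∈ Finset.Icc 1 (N.factorization p), ((p:ℝ) ^ a)⁻¹
        = ∑ i ∈ range (N.factorization p), (p:ℝ)⁻¹ * ((p:ℝ)⁻¹) ^ i := by
          rw [← Finset.Ico_add_one_right_eq_Icc, Finset.sum_Ico_eq_sum_range]
          apply Finset.sum_congr (by norm_num)
          intro i _
          rw [pow_add, pow_one, mul_inv, ← inv_pow]
      _ = (p:ℝ)⁻¹ * ∑ i ∈ range (N.factorization p), ((p:ℝ)⁻¹) ^ i := by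
          rw [Finset.mul_sum]
      _ ≤ (p:ℝ)⁻¹ * (1 - (p:ℝ)⁻¹)⁻¹ := by
          apply mul_le_mul_of_nonneg_left (geom_aux hr0 hr1 _) hr0
      _ ≤ 2 / p := by
          have h2 : (1:ℝ)/2 ≤ 1 - (p:ℝ)⁻¹ := by
            have : (p:ℝ)⁻¹ ≤ 1/2 := by
              rw [inv_le_comm₀ hp0 (by norm_num)]; linarith
            linarith
          have : (1 - (p:ℝ)⁻¹)⁻¹ ≤ 2 := by
            rw [inv_le_comm₀ (by linarith) (by norm_num)]
            linarith
          calc (p:ℝ)⁻¹ * (1 - (p:ℝ)⁻¹)⁻¹ ≤ (p:ℝ)⁻¹ * 2 :=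
                mul_le_mul_of_nonneg_left this (by positivity)
            _ = 2 / p := by ring
  calc ∑ a ∈ Finset.Icc 1 (N.factorization p), Real.log p / ((p:ℕ) ^ a : ℕ)
      = Real.log p * ∑ a ∈ Finset.Icc 1 (N.factorization p), ((p:ℝ) ^ a)⁻¹ := by
        rw [Finset.mul_sum]
        apply Finset.sum_congr rfl
        intro a _
        push_cast
        ring
    _ ≤ Real.log p * (2 / p) := mul_le_mul_of_nonneg_left hinv hlp
    _ = 2 * (Real.log p / p) := by ring


theorem swap_bound (N : ℕ) (hN : 0 < N) :
    ∑ d ∈ N.divisors, Real.log d / d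
      ≤ (∑ e ∈ N.divisors, (1:ℝ) / e) * ∑ m ∈ N.divisors, Λ m / m := by
  have hN0 : N ≠ 0 := hN.ne'
  have step1 : ∑ d ∈ N.divisors, Real.log d / d
      = ∑ q ∈ N.divisors.sigma (fun d => d.divisors), Λ q.2 / q.1 := by
    rw [Finset.sum_sigma]
    apply Finset.sum_congr rfl
    intro d hd
    rw [← vonMangoldt_sum, Finset.sum_div]
  have step2 : ∑ q ∈ N.divisors.sigma (fun d => d.divisors), Λ q.2 / q.1
      = ∑ q ∈ N.divisors.sigma (fun m => (N/m).divisors), Λ q.1 / ((q.1 * q.2 : ℕ) : ℝ) := by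
    apply Finset.sum_nbij' (i := fun q => (⟨q.2, q.1 / q.2⟩ : (_ : ℕ) × ℕ))
      (j := fun q => (⟨q.1 * q.2, q.1⟩ : (_ : ℕ) × ℕ))
    · intro q hq
      simp only [Finset.mem_sigma, Nat.mem_divisors] at *
      obtain ⟨⟨hdN, _⟩, hmd, hd0⟩ := hq
      obtain ⟨c, hc⟩ := hmd
      obtain ⟨k, hk⟩ := hdN
      have hm0 : q.2 ≠ 0 := by intro h; rw [h] at hc; simp at hc; exact hd0 hc
      refine ⟨⟨dvd_trans ⟨c, hc⟩ ⟨k, hk⟩, hN0⟩, ⟨k, ?_⟩, ?_⟩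
      · rw [hc, Nat.mul_div_cancel_left c (Nat.pos_of_ne_zero hm0), hk, hc, Nat.mul_assoc,
          Nat.mul_div_cancel_left _ (Nat.pos_of_ne_zero hm0)]
      · exact (Nat.div_pos (Nat.le_of_dvd hN (dvd_trans ⟨c, hc⟩ ⟨k, hk⟩))
          (Nat.pos_of_ne_zero hm0)).ne'
    · intro q hq
      simp only [Finset.mem_sigma, Nat.mem_divisors] at *
      obtain ⟨⟨hmN, _⟩, heN, hNm0⟩ := hq
      obtain ⟨c, hc⟩ := heN
      refine ⟨⟨?_, hN0⟩, Dvd.intro q.2 rfl, ?_⟩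
      · have : N = q.1 * (N / q.1) := (Nat.mul_div_cancel' hmN).symm
        rw [this, hc]
        exact ⟨c, by ring⟩
      · have hm0 : q.1 ≠ 0 := by intro h; rw [h] at hmN; exact hN0 (Nat.eq_zero_of_zero_dvd hmN)
        have he0 : q.2 ≠ 0 := by
          intro h; rw [h] at hc; exact hNm0 (by omega)
        exact Nat.mul_ne_zero hm0 he0
    · intro q hq
      simp only [Finset.mem_sigma, Nat.mem_divisors] at hq
      obtain ⟨⟨hdN, _⟩, hmd, hd0⟩ := hq
      have : q.2 * (q.1 / q.2) = q.1 := Nat.mul_div_cancel' hmd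
      ext
      · exact this
      · exact HEq.rfl
    · intro q hq
      simp only [Finset.mem_sigma, Nat.mem_divisors] at hq
      have hm0 : q.1 ≠ 0 := by
        intro h
        rw [h] at hq
        exact hN0 (Nat.eq_zero_of_zero_dvd hq.1.1)
      have : q.1 * q.2 / q.1 = q.2 := Nat.mul_div_cancel_left _ (Nat.pos_of_ne_zero hm0)
      ext
      · rfl
      · simp only [this]
        exact HEq.rfl
    · intro q hq
      simp only [Finset.mem_sigma, Nat.mem_divisors] at hq
      obtain ⟨⟨hdN, _⟩, hmd, hd0⟩ := hq
      rw [Nat.mul_div_cancel' hmd]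
  rw [step1, step2, Finset.sum_sigma]
  have step3 : ∀ m ∈ N.divisors,
      ∑ e ∈ (N/m).divisors, Λ m / ((m * e : ℕ) : ℝ)
        ≤ (Λ m / m) * ∑ e ∈ N.divisors, (1:ℝ) / e := by
    intro m hm
    rw [Nat.mem_divisors] at hm
    have hsub : (N/m).divisors ⊆ N.divisors :=
      Nat.divisors_subset_of_dvd hN0 (Nat.div_dvd_of_dvd hm.1)
    have hmnn : 0 ≤ Λ m / m := div_nonneg vonMangoldt_nonneg (Nat.cast_nonneg m)
    calc ∑ e ∈ (N/m).divisors, Λ m / ((m * e : ℕ) : ℝ)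
        = ∑ e ∈ (N/m).divisors, (Λ m / m) * (1 / e) := by
          apply Finset.sum_congr rfl
          intro e he
          push_cast
          rw [div_mul_eq_div_div]
          ring
      _ = (Λ m / m) * ∑ e ∈ (N/m).divisors, (1:ℝ) / e := by rw [Finset.mul_sum]
      _ ≤ (Λ m / m) * ∑ e ∈ N.divisors, (1:ℝ) / e := by
          apply mul_le_mul_of_nonneg_left _ hmnn
          apply Finset.sum_le_sum_of_subset_of_nonneg hsub
          intro e he _
          positivity
  calc ∑ m ∈ N.divisors, ∑ e ∈ (N/m).divisors, Λ m / ((m * e : ℕ) : ℝ)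
      ≤ ∑ m ∈ N.divisors, (Λ m / m) * ∑ e ∈ N.divisors, (1:ℝ) / e :=
        Finset.sum_le_sum step3
    _ = (∑ e ∈ N.divisors, (1:ℝ) / e) * ∑ m ∈ N.divisors, Λ m / m := by
        rw [← Finset.sum_mul]
        ring

theorem stmt_13 :
    ∃ C : ℝ, ∀ N : ℕ, 0 < N →
      ∑ d ∈ N.divisors, Real.log d / d
        ≤ C * (∑ d ∈ N.divisors, (1 : ℝ) / d) * Real.log (Real.log (N + 2)) := by
  set c₀ : ℝ := Real.log (Real.log 3) with hc₀def
  refine ⟨2 + (4 * Real.log 4 + 2) / c₀, ?_⟩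
  intro N hN
  have hN0 : N ≠ 0 := hN.ne'
  set u : ℝ := Real.log (N + 2) with hu
  set sig : ℝ := ∑ d ∈ N.divisors, (1 : ℝ) / d with hsig
  have hsignn : 0 ≤ sig := Finset.sum_nonneg fun d _ => by positivity
  have h3e : Real.exp 1 < 3 := lt_trans Real.exp_one_lt_d9 (by norm_num)
  have hlog3 : 1 < Real.log 3 := (Real.lt_log_iff_exp_lt (by norm_num)).2 h3e
  have hc₀ : 0 < c₀ := Real.log_pos hlog3
  have hu3 : Real.log 3 ≤ u := by
    rw [hu]
    apply Real.log_le_log (by norm_num)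
    have : (1:ℝ) ≤ (N:ℝ) := by exact_mod_cast hN
    linarith
  have hu1 : 1 < u := lt_of_lt_of_le hlog3 hu3
  have hlogu : c₀ ≤ Real.log u := Real.log_le_log (by linarith) hu3
  have hlogu0 : 0 < Real.log u := lt_of_lt_of_le hc₀ hlogu
  -- main chain
  have hswap := swap_bound N hN
  have hvm := vonMangoldt_div_sum N hN
  have hpf := primeFactors_bound N hN
  have hB : ∑ m ∈ N.divisors, ArithmeticFunction.vonMangoldt m / m
      ≤ 2 * (Real.log (u + 3) + Real.log 4 + 1) := by
    calc ∑ m ∈ N.divisors, ArithmeticFunction.vonMangoldt m / m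
        ≤ 2 * ∑ p ∈ N.primeFactors, Real.log p / p := hvm
      _ ≤ 2 * (Real.log (u + 3) + Real.log 4 + 1) := by
          have := hpf
          rw [← hu] at this
          linarith
  have hBC : 2 * (Real.log (u + 3) + Real.log 4 + 1)
      ≤ (2 + (4 * Real.log 4 + 2) / c₀) * Real.log u := by
    have h4u : Real.log (u + 3) ≤ Real.log 4 + Real.log u := by
      calc Real.log (u + 3) ≤ Real.log (4 * u) :=
            Real.log_le_log (by linarith) (by linarith)
        _ = Real.log 4 + Real.log u := Real.log_mul (by norm_num) (by linarith)
    have hconst : 4 * Real.log 4 + 2 ≤ ((4 * Real.log 4 + 2) / c₀) * Real.log u := by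
      have h4 : (0:ℝ) ≤ 4 * Real.log 4 + 2 := by
        have := Real.log_nonneg (by norm_num : (1:ℝ) ≤ 4)
        linarith
      calc 4 * Real.log 4 + 2 = ((4 * Real.log 4 + 2) / c₀) * c₀ := by
            field_simp
        _ ≤ ((4 * Real.log 4 + 2) / c₀) * Real.log u :=
            mul_le_mul_of_nonneg_left hlogu (by positivity)
    nlinarith [h4u, hconst]
  calc ∑ d ∈ N.divisors, Real.log d / d
      ≤ sig * ∑ m ∈ N.divisors, ArithmeticFunction.vonMangoldt m / m := hswap
    _ ≤ sig * ((2 + (4 * Real.log 4 + 2) / c₀) * Real.log u) :=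
        mul_le_mul_of_nonneg_left (le_trans hB hBC) hsignn
    _ = (2 + (4 * Real.log 4 + 2) / c₀) * sig * Real.log u := by ring
end
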